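/- The homotopy mapping h(x,t) = (1 − t) d(x,t) + t (x − x⁰) is continuously differentiable from ℝ^n × [0,1] to ℝ^n. -/

import Mathlib

open Real Set RealInnerProductSpace

/-- Clamped slope function: the derivative of our glued transition function. -/
noncomputable def ψaux (v : ℝ) : ℝ := (π / 2) * Real.sin (π * (max 0 (min v 1)))

lemma ψaux_cont : Continuous ψaux := by
  unfold ψaux
  exact continuous_const.mul
    (Real.continuous_sin.comp (continuous_const.mul
      (continuous_const.max (continuous_id.min continuous_const))))

/-- Glued transition function: `0` for `u ≤ 0`, `sin²(πu/2)` on `[0,1]`, `1` for `u ≥ 1`. -/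
noncomputable def φaux (u : ℝ) : ℝ := ∫ v in (0 : ℝ)..u, ψaux v

lemma φaux_hasDerivAt (u : ℝ) : HasDerivAt φaux (ψaux u) u :=
  intervalIntegral.integral_hasDerivAt_right
    (ψaux_cont.intervalIntegrable _ _)
    (ψaux_cont.stronglyMeasurableAtFilter _ _)
    ψaux_cont.continuousAt

lemma φaux_contDiff : ContDiff ℝ 1 φaux := by
  rw [contDiff_one_iff_deriv]
  refine ⟨fun u => (φaux_hasDerivAt u).differentiableAt, ?_⟩
  have : deriv φaux = ψaux := funext fun u => (φaux_hasDerivAt u).deriv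
  rw [this]; exact ψaux_cont

lemma φaux_eq_of_mem {u : ℝ} (hu : u ∈ Icc (0 : ℝ) 1) :
    φaux u = Real.sin (π / 2 * u) ^ 2 := by
  obtain ⟨h0, h1⟩ := hu
  have hcong : ∀ v ∈ Set.uIcc (0 : ℝ) u, ψaux v = (π / 2) * Real.sin (π * v) := by
    intro v hv
    rw [Set.uIcc_of_le h0] at hv
    have hv0 : 0 ≤ v := hv.1
    have hv1 : v ≤ 1 := hv.2.trans h1
    unfold ψaux
    rw [min_eq_left hv1, max_eq_right hv0]
  have hderiv : ∀ v ∈ Set.uIcc (0 : ℝ) u,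
      HasDerivAt (fun w => Real.sin (π / 2 * w) ^ 2) ((π / 2) * Real.sin (π * v)) v := by
    intro v _
    have h1 : HasDerivAt (fun w : ℝ => π / 2 * w) (π / 2) v := by
      simpa using (hasDerivAt_id v).const_mul (π / 2)
    have h2 : HasDerivAt (fun w => Real.sin (π / 2 * w))
        (Real.cos (π / 2 * v) * (π / 2)) v := (Real.hasDerivAt_sin _).comp v h1
    have h3 : HasDerivAt (fun w => Real.sin (π / 2 * w) ^ 2)
        (((2 : ℕ) : ℝ) * Real.sin (π / 2 * v) ^ (2 - 1) * (Real.cos (π / 2 * v) * (π / 2))) v :=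
      h2.fun_pow 2
    convert h3 using 1
    have : π * v = 2 * (π / 2 * v) := by ring
    rw [this, Real.sin_two_mul]
    ring
  have := intervalIntegral.integral_eq_sub_of_hasDerivAt hderiv
    ((continuous_const.mul (Real.continuous_sin.comp
      (continuous_const.mul continuous_id))).intervalIntegrable _ _)
  unfold φaux
  rw [intervalIntegral.integral_congr hcong, this]
  simp

lemma φaux_eq_zero {u : ℝ} (hu : u ≤ 0) : φaux u = 0 := by
  unfold φaux
  have hcong : ∀ v ∈ Set.uIcc (0 : ℝ) u, ψaux v = 0 := by
    intro v hv
    rw [Set.uIcc_of_ge hu] at hv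
    have hv0 : v ≤ 0 := hv.2
    unfold ψaux
    rw [min_eq_left (hv0.trans zero_le_one), max_eq_left hv0]
    simp
  rw [intervalIntegral.integral_congr hcong, intervalIntegral.integral_zero]

lemma φaux_eq_one {u : ℝ} (hu : 1 ≤ u) : φaux u = 1 := by
  have hsplit : (∫ v in (0:ℝ)..1, ψaux v) + ∫ v in (1:ℝ)..u, ψaux v
      = ∫ v in (0:ℝ)..u, ψaux v :=
    intervalIntegral.integral_add_adjacent_intervals
      (ψaux_cont.intervalIntegrable _ _) (ψaux_cont.intervalIntegrable _ _)
  have h1 : (∫ v in (0:ℝ)..1, ψaux v) = 1 := by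
    have := φaux_eq_of_mem (u := 1) ⟨zero_le_one, le_rfl⟩
    unfold φaux at this
    rw [this, mul_one, Real.sin_pi_div_two, one_pow]
  have h2 : (∫ v in (1:ℝ)..u, ψaux v) = 0 := by
    have hcong : ∀ v ∈ Set.uIcc (1 : ℝ) u, ψaux v = 0 := by
      intro v hv
      rw [Set.uIcc_of_le hu] at hv
      have hv1 : 1 ≤ v := hv.1
      unfold ψaux
      rw [min_eq_right hv1, max_eq_right zero_le_one, mul_one, Real.sin_pi]
      simp
    rw [intervalIntegral.integral_congr hcong, intervalIntegral.integral_zero]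
  unfold φaux
  rw [← hsplit, h1, h2, add_zero]

/-- h(x,t) = (1 − t) d(x,t) + t (x − x⁰) is continuously differentiable
from ℝⁿ × [0,1] to ℝⁿ. -/
theorem stmt_2
    (n N L : ℕ) (hn : 0 < n) (hN : 0 < N) (hL : 0 < L) (hLN : L ≤ N)
    (f : ℕ → EuclideanSpace ℝ (Fin n) → EuclideanSpace ℝ (Fin n))
    (hf : ∀ i < N, ContDiff ℝ 1 (f i))
    (q : ℕ → ℕ) (hq0 : q 0 = 0) (hqL : q L = N)
    (hqmono : ∀ ℓ < L, q ℓ < q (ℓ + 1))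
    (F : ℕ → EuclideanSpace ℝ (Fin n) → EuclideanSpace ℝ (Fin n))
    (hF0 : ∀ x, F 0 x = 0)
    (hF : ∀ ℓ, 1 ≤ ℓ → ℓ ≤ L → ∀ x,
      F ℓ x = (q ℓ : ℝ)⁻¹ • ∑ i ∈ Finset.range (q ℓ), f i x)
    (t : ℕ → ℝ) (ht0 : t 0 = 1) (htL : t L = 0)
    (htmono : ∀ ℓ < L, t (ℓ + 1) < t ℓ)
    (θ : ℕ → ℝ → ℝ)
    (hθ : ∀ ℓ s, θ ℓ s = Real.sin (π / 2 * ((s - t (ℓ - 1)) / (t ℓ - t (ℓ - 1)))) ^ 2)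
    (d : EuclideanSpace ℝ (Fin n) → ℝ → EuclideanSpace ℝ (Fin n))
    (hd : ∀ ℓ, 1 ≤ ℓ → ℓ ≤ L → ∀ s ∈ Icc (t ℓ) (t (ℓ - 1)), ∀ x,
      d x s = (1 - θ ℓ s) • F (ℓ - 1) x + θ ℓ s • F ℓ x)
    (x0 : EuclideanSpace ℝ (Fin n))
    (h : EuclideanSpace ℝ (Fin n) → ℝ → EuclideanSpace ℝ (Fin n))
    (hh : ∀ x s, h x s = (1 - s) • d x s + s • (x - x0))
    :
    ContDiffOn ℝ 1 (fun p : EuclideanSpace ℝ (Fin n) × ℝ => h p.1 p.2)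
      (Set.univ ×ˢ Icc (0 : ℝ) 1) := by
  -- monotonicity of q and antitonicity of t on [0, L]
  have qmono : ∀ a b, a ≤ b → b ≤ L → q a ≤ q b := by
    intro a b hab hbL
    induction b with
    | zero => have : a = 0 := by omega
              subst this; exact le_rfl
    | succ b ih =>
      rcases Nat.lt_succ_iff_lt_or_eq.1 (Nat.lt_succ_of_le hab) with hlt | heq
      · exact (ih (by omega) (by omega)).trans (hqmono b (by omega)).le
      · subst heq; exact le_rfl
  have tanti : ∀ a b, a ≤ b → b ≤ L → t b ≤ t a := by
    intro a b hab hbL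
    induction b with
    | zero => simp_all
    | succ b ih =>
      rcases Nat.lt_succ_iff_lt_or_eq.1 (Nat.lt_succ_of_le hab) with hlt | heq
      · exact ((htmono b (by omega)).le).trans (ih (by omega) (by omega))
      · subst heq; exact le_rfl
  -- F ℓ is C¹ for ℓ ≤ L
  have hFcd : ∀ ℓ, ℓ ≤ L → ContDiff ℝ 1 (F ℓ) := by
    intro ℓ hℓ
    rcases Nat.eq_zero_or_pos ℓ with h0 | h1
    · subst h0
      have : F 0 = fun _ => (0 : EuclideanSpace ℝ (Fin n)) := funext hF0
      rw [this]; exact contDiff_const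
    · have heq : F ℓ = fun x => (q ℓ : ℝ)⁻¹ • ∑ i ∈ Finset.range (q ℓ), f i x :=
        funext (hF ℓ h1 hℓ)
      rw [heq]
      refine ContDiff.const_smul _ (ContDiff.sum fun i hi => ?_)
      exact hf i (lt_of_lt_of_le (Finset.mem_range.1 hi) (hqL ▸ qmono ℓ L hℓ le_rfl))
  -- the globally C¹ model function
  set Θ : ℕ → ℝ → ℝ := fun ℓ s => φaux ((s - t (ℓ - 1)) / (t ℓ - t (ℓ - 1))) with hΘ
  set G : EuclideanSpace ℝ (Fin n) × ℝ → EuclideanSpace ℝ (Fin n) := fun p =>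
    (1 - p.2) • (∑ i ∈ Finset.range L, Θ (i + 1) p.2 • (F (i + 1) p.1 - F i p.1))
      + p.2 • (p.1 - x0) with hG
  have hGcd : ContDiff ℝ 1 G := by
    refine ContDiff.add (ContDiff.smul (contDiff_const.sub contDiff_snd)
      (ContDiff.sum fun i hi => ContDiff.fun_smul ?_ ?_))
      (contDiff_snd.smul (contDiff_fst.sub contDiff_const))
    · exact φaux_contDiff.comp ((contDiff_snd.sub contDiff_const).div_const _)
    · have hiL := Finset.mem_range.1 hi
      exact ((hFcd (i + 1) (by omega)).comp contDiff_fst).sub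
        ((hFcd i (by omega)).comp contDiff_fst)
  refine hGcd.contDiffOn.congr ?_
  rintro ⟨x, s⟩ hp
  have hs : s ∈ Icc (0 : ℝ) 1 := hp.2
  -- find the slab containing s
  have hfind : ∀ k, k ≤ L → t k ≤ s →
      ∃ m, 1 ≤ m ∧ m ≤ max k 1 ∧ t m ≤ s ∧ s ≤ t (m - 1) := by
    intro k
    induction k with
    | zero =>
      intro _ h0
      rw [ht0] at h0
      have hs1 : s = 1 := le_antisymm hs.2 h0
      refine ⟨1, le_rfl, by omega, ?_, ?_⟩
      · have := htmono 0 hL; rw [ht0] at this; linarith [hs1]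
      · simp [ht0, hs1]
    | succ k ih =>
      intro hkL hks
      by_cases hk : t k ≤ s
      · obtain ⟨m, hm1, hm2, hm3, hm4⟩ := ih (by omega) hk
        exact ⟨m, hm1, by omega, hm3, hm4⟩
      · exact ⟨k + 1, by omega, by omega, hks, by simpa using (not_le.1 hk).le⟩
  obtain ⟨m, hm1, hm2, hmt, htm⟩ := hfind L le_rfl (htL ▸ hs.1)
  have hmL : m ≤ L := by omega
  -- key facts about Θ on this slab
  have hslab : ∀ ℓ, 1 ≤ ℓ → ℓ ≤ L → t ℓ - t (ℓ - 1) < 0 := by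
    intro ℓ h1 h2
    have := htmono (ℓ - 1) (by omega)
    have heq : ℓ - 1 + 1 = ℓ := by omega
    rw [heq] at this
    linarith
  have hΘ1 : ∀ ℓ, 1 ≤ ℓ → ℓ < m → Θ ℓ s = 1 := by
    intro ℓ h1 h2
    have hneg := hslab ℓ h1 (by omega)
    have hsle : s ≤ t ℓ := htm.trans (tanti ℓ (m - 1) (by omega) (by omega))
    exact φaux_eq_one ((one_le_div_of_neg hneg).2 (by linarith))
  have hΘ0 : ∀ ℓ, m < ℓ → ℓ ≤ L → Θ ℓ s = 0 := by
    intro ℓ h1 h2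
    have hneg := hslab ℓ (by omega) h2
    have hsge : t (ℓ - 1) ≤ s := (tanti m (ℓ - 1) (by omega) (by omega)).trans hmt
    exact φaux_eq_zero (div_nonpos_of_nonneg_of_nonpos (by linarith) hneg.le)
  have hΘm : Θ m s = θ m s := by
    have hneg := hslab m hm1 hmL
    have hr0 : 0 ≤ (s - t (m - 1)) / (t m - t (m - 1)) :=
      div_nonneg_of_nonpos (by linarith) hneg.le
    have hr1 : (s - t (m - 1)) / (t m - t (m - 1)) ≤ 1 :=
      (div_le_one_of_neg hneg).2 (by linarith)
    rw [hθ]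
    exact φaux_eq_of_mem ⟨hr0, hr1⟩
  -- compute G = h at (x, s)
  show h x s = G (x, s)
  rw [hh, hd m hm1 hmL s ⟨hmt, htm⟩ x, hG]
  simp only
  congr 1
  congr 1
  -- reduce to the sum identity
  have hsum1 : ∑ i ∈ Finset.range m, Θ (i + 1) s • (F (i + 1) x - F i x)
      = ∑ i ∈ Finset.range L, Θ (i + 1) s • (F (i + 1) x - F i x) := by
    refine Finset.sum_subset (Finset.range_subset_range.2 hmL) ?_
    intro i hiL hiM
    rw [hΘ0 (i + 1) (by simp at hiM; omega) (by simp at hiL; omega), zero_smul]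
  obtain ⟨k, rfl⟩ : ∃ k, m = k + 1 := ⟨m - 1, by omega⟩
  rw [← hsum1, Finset.sum_range_succ]
  have hsum2 : ∑ i ∈ Finset.range k, Θ (i + 1) s • (F (i + 1) x - F i x)
      = ∑ i ∈ Finset.range k, (F (i + 1) x - F i x) := by
    refine Finset.sum_congr rfl fun i hi => ?_
    rw [hΘ1 (i + 1) (by omega) (by simp at hi; omega), one_smul]
  rw [hsum2, Finset.sum_range_sub (fun i => F i x), hF0, sub_zero, hΘm]
  simp only [Nat.add_sub_cancel]
  rw [sub_smul, one_smul, smul_sub]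
  abel
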